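/- Let X ⊆ ℝⁿ be convex and let γ_p : ℝⁿ → ℝ be continuous. Suppose the weak epistemic pooling principle holds for average pooling for all e, f ∈ X, i.e., for all e, f ∈ X, γ_p((e+f)/2) ≥ 0 ↔ (γ_p(e) ≥ 0 ∨ γ_p(f) ≥ 0). Then either γ_p(e) ≥ 0 for every e ∈ X, or γ_p(e) < 0 for every e ∈ X. -/
import Mathlib


/-- If γ_p is continuous and the weak epistemic pooling principle holds for
average pooling on a convex set X, then either every e ∈ X weakly satisfies p, or
none does. -/
theorem avg_pooling_weak_continuous_trivial (n : ℕ) (X : Set (Fin n → ℝ))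
    (hX : Convex ℝ X) (γ : (Fin n → ℝ) → ℝ) (hcont : Continuous γ)
    (hpool : ∀ e ∈ X, ∀ f ∈ X, γ ((e + f) / 2) ≥ 0 ↔ (γ e ≥ 0 ∨ γ f ≥ 0)) :
    (∀ e ∈ X, γ e ≥ 0) ∨ (∀ e ∈ X, γ e < 0) := by
  by_contra h
  push_neg at h
  obtain ⟨⟨f, hf, hfneg⟩, ⟨e, he, hepos⟩⟩ := h
  -- hfneg : γ f < 0, hepos : γ e ≥ 0
  set a : ℕ → (Fin n → ℝ) := fun k => ((1:ℝ)/2^k) • e + (1 - (1:ℝ)/2^k) • f with ha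
  have hmem : ∀ k, a k ∈ X := by
    intro k
    have h1 : (0:ℝ) ≤ 1/2^k := by positivity
    have h2 : (1:ℝ)/2^k ≤ 1 := by
      rw [div_le_one (by positivity)]
      exact one_le_pow₀ one_le_two
    exact hX he hf h1 (by linarith) (by ring)
  have hstep : ∀ k, a (k+1) = (a k + f) / 2 := by
    intro k
    funext i
    simp only [ha, Pi.add_apply, Pi.smul_apply, Pi.div_apply, Pi.ofNat_apply, smul_eq_mul,
      pow_succ]
    ring
  have hpos : ∀ k, γ (a k) ≥ 0 := by
    intro k
    induction k with
    | zero =>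
      have : a 0 = e := by funext i; simp [ha]
      rw [this]; exact hepos
    | succ k ih =>
      rw [hstep k]
      exact (hpool (a k) (hmem k) f hf).mpr (Or.inl ih)
  have htend : Filter.Tendsto a Filter.atTop (nhds f) := by
    have h0 : Filter.Tendsto (fun k : ℕ => ((1:ℝ)/2^k)) Filter.atTop (nhds 0) := by
      simpa [one_div] using tendsto_pow_atTop_nhds_zero_of_lt_one
        (by norm_num : (0:ℝ) ≤ 1/2) (by norm_num : (1:ℝ)/2 < 1) |>.congr
        (fun k => by rw [div_pow]; norm_num)
    have : Filter.Tendsto (fun k : ℕ => ((1:ℝ)/2^k) • e + (1 - (1:ℝ)/2^k) • f)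
        Filter.atTop (nhds ((0:ℝ) • e + ((1:ℝ) - 0) • f)) := by
      exact Filter.Tendsto.add (h0.smul_const e) ((Filter.Tendsto.const_sub 1 h0).smul_const f)
    simpa [ha, one_div] using this
  have : γ f ≥ 0 :=
    ge_of_tendsto ((hcont.tendsto f).comp htend) (Filter.Eventually.of_forall hpos)
  linarith
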